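/- For any k×l 0-1 pattern P with k' = max(k,l): if there exists n₀ ≥ k'−1 with sat(P,n₀,n₀) < n₀/(k'−1), then sat(P,n,n) ≤ sat(P,n₀,n₀) for all n ≥ n₀. In particular, for every pattern P either sat(P,n,n) = O(1) or sat(P,n,n) = Θ(n). -/

import Mathlib

/-- `M` contains the pattern `P`: there is an order-preserving selection of rows and
columns of `M` whose submatrix can be turned into `P` by changing `1`s to `0`s. -/
def Contains {k l m n : ℕ} (P : Fin k → Fin l → Bool) (M : Fin m → Fin n → Bool) : Prop :=
  ∃ r : Fin k → Fin m, ∃ c : Fin l → Fin n, StrictMono r ∧ StrictMono c ∧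
    ∀ i j, P i j = true → M (r i) (c j) = true

def Avoids {k l m n : ℕ} (P : Fin k → Fin l → Bool) (M : Fin m → Fin n → Bool) : Prop :=
  ¬ Contains P M

/-- The weight of a 0-1 matrix: the number of its `1` entries. -/
def weight {m n : ℕ} (M : Fin m → Fin n → Bool) : ℕ :=
  (Finset.univ.filter (fun p : Fin m × Fin n => M p.1 p.2 = true)).card

/-- The matrix obtained from `M` by changing the entry at `(p,q)` to `1`. -/
def setOne {m n : ℕ} (M : Fin m → Fin n → Bool) (p : Fin m) (q : Fin n) :
    Fin m → Fin n → Bool :=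
  fun i j => if i = p ∧ j = q then true else M i j

/-- `M` is saturating for `P`: it avoids `P` and flipping any `0` entry creates an
occurrence of `P`. -/
def Saturating {k l m n : ℕ} (P : Fin k → Fin l → Bool) (M : Fin m → Fin n → Bool) : Prop :=
  Avoids P M ∧ ∀ p q, M p q = false → Contains P (setOne M p q)

/-- `(r, c)` is an occurrence of `P` in `M`. -/
def IsOcc {k l m n : ℕ} (P : Fin k → Fin l → Bool) (M : Fin m → Fin n → Bool)
    (r : Fin k → Fin m) (c : Fin l → Fin n) : Prop :=
  StrictMono r ∧ StrictMono c ∧ ∀ i j, P i j = true → M (r i) (c j) = true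

/-- `M` is semisaturating for `P`: flipping any `0` entry creates a new occurrence of `P`. -/
def Semisaturating {k l m n : ℕ} (P : Fin k → Fin l → Bool) (M : Fin m → Fin n → Bool) : Prop :=
  ∀ p q, M p q = false → ∃ r c, IsOcc P (setOne M p q) r c ∧ ¬ IsOcc P M r c

/-- `ex(P,m,n)`: the maximum weight of an `m × n` matrix avoiding `P`. -/
noncomputable def exF {k l : ℕ} (P : Fin k → Fin l → Bool) (m n : ℕ) : ℕ :=
  sSup {w | ∃ M : Fin m → Fin n → Bool, Avoids P M ∧ weight M = w}

/-- `sat(P,m,n)`: the minimum weight of an `m × n` matrix saturating for `P`. -/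
noncomputable def satF {k l : ℕ} (P : Fin k → Fin l → Bool) (m n : ℕ) : ℕ :=
  sInf {w | ∃ M : Fin m → Fin n → Bool, Saturating P M ∧ weight M = w}

/-- `ssat(P,m,n)`: the minimum weight of an `m × n` matrix semisaturating for `P`. -/
noncomputable def ssatF {k l : ℕ} (P : Fin k → Fin l → Bool) (m n : ℕ) : ℕ :=
  sInf {w | ∃ M : Fin m → Fin n → Bool, Semisaturating P M ∧ weight M = w}

set_option maxRecDepth 4000

-- ===================== auxiliary lemmas =======================

lemma sm_le_aux {a b : ℕ} {f : Fin a → Fin b} (hf : StrictMono f) :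
    ∀ (v : ℕ) (i : Fin a), i.val = v → v ≤ (f i).val := by
  intro v
  induction v with
  | zero => intro i _; omega
  | succ v ih =>
    intro i hi
    have hv : v < a := by omega
    have h1 : (⟨v, hv⟩ : Fin a) < i := by simp [Fin.lt_def, hi]
    have h2 := hf h1
    have h3 := ih ⟨v, hv⟩ rfl
    simp only [Fin.lt_def] at h2
    omega

lemma sm_le {a b : ℕ} {f : Fin a → Fin b} (hf : StrictMono f) (i : Fin a) :
    i.val ≤ (f i).val := sm_le_aux hf i.val i rfl

lemma sm_add {a b : ℕ} {f : Fin a → Fin b} (hf : StrictMono f) (i : Fin a) :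
    ∀ (t : ℕ) (h : i.val + t < a), (f i).val + t ≤ (f ⟨i.val + t, h⟩).val := by
  intro t
  induction t with
  | zero =>
    intro h
    have he : (⟨i.val + 0, h⟩ : Fin a) = i := by ext; simp
    rw [he]
    omega
  | succ t ih =>
    intro h
    have h' : i.val + t < a := by omega
    have h1 : (⟨i.val + t, h'⟩ : Fin a) < ⟨i.val + t + 1, by omega⟩ := by simp [Fin.lt_def]
    have h2 := hf h1
    have h3 := ih h'
    have he : (⟨i.val + (t+1), h⟩ : Fin a) = ⟨i.val + t + 1, by omega⟩ := rfl
    rw [he]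
    simp only [Fin.lt_def] at h2
    omega

lemma weight_le_card {m n : ℕ} (M : Fin m → Fin n → Bool) : weight M ≤ m * n := by
  unfold weight
  calc (Finset.univ.filter (fun p : Fin m × Fin n => M p.1 p.2 = true)).card
      ≤ (Finset.univ : Finset (Fin m × Fin n)).card := Finset.card_filter_le _ _
    _ = m * n := by simp

lemma weight_setOne {m n : ℕ} (M : Fin m → Fin n → Bool) (p : Fin m) (q : Fin n)
    (h : M p q = false) : weight (setOne M p q) = weight M + 1 := by
  unfold weight setOne
  have heq : (Finset.univ.filter
      (fun x : Fin m × Fin n => (if x.1 = p ∧ x.2 = q then true else M x.1 x.2) = true))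
      = insert (p,q) (Finset.univ.filter (fun x : Fin m × Fin n => M x.1 x.2 = true)) := by
    ext x
    simp only [Finset.mem_filter, Finset.mem_insert, Finset.mem_univ, true_and]
    by_cases hx : x = (p,q)
    · subst hx; simp
    · have hx2 : ¬(x.1 = p ∧ x.2 = q) := by
        intro hh; exact hx (Prod.ext hh.1 hh.2)
      simp [hx2, hx]
  rw [heq, Finset.card_insert_of_notMem]
  simp [h]

lemma exists_saturating {k l m n : ℕ} (P : Fin k → Fin l → Bool)
    (h : ∃ M : Fin m → Fin n → Bool, Avoids P M) :
    ∃ M : Fin m → Fin n → Bool, Saturating P M := by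
  classical
  obtain ⟨M₀, hM₀⟩ := h
  set S : Set ℕ := {w | ∃ M : Fin m → Fin n → Bool, Avoids P M ∧ weight M = w} with hS
  have hne : S.Nonempty := ⟨weight M₀, M₀, hM₀, rfl⟩
  have hbdd : BddAbove S := ⟨m*n, by rintro w ⟨M, _, rfl⟩; exact weight_le_card M⟩
  obtain ⟨M, hM, hw⟩ := Nat.sSup_mem hne hbdd
  refine ⟨M, hM, ?_⟩
  intro p q hpq
  by_contra hC
  have hmem : weight (setOne M p q) ∈ S := ⟨_, hC, rfl⟩
  have hle := le_csSup hbdd hmem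
  rw [weight_setOne M p q hpq, hw] at hle
  omega

lemma satF_le {k l m n : ℕ} {P : Fin k → Fin l → Bool} {M : Fin m → Fin n → Bool}
    (h : Saturating P M) : satF P m n ≤ weight M := Nat.sInf_le ⟨M, h, rfl⟩

lemma satF_mem {k l m n : ℕ} (P : Fin k → Fin l → Bool)
    (h : ∃ M : Fin m → Fin n → Bool, Saturating P M) :
    ∃ M : Fin m → Fin n → Bool, Saturating P M ∧ weight M = satF P m n := by
  obtain ⟨M₀, hM₀⟩ := h
  have hne : {w | ∃ M : Fin m → Fin n → Bool, Saturating P M ∧ weight M = w}.Nonempty :=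
    ⟨weight M₀, M₀, hM₀, rfl⟩
  exact Nat.sInf_mem hne

def tr {m n : ℕ} (M : Fin m → Fin n → Bool) : Fin n → Fin m → Bool := fun j i => M i j

lemma contains_tr {k l m n : ℕ} {P : Fin k → Fin l → Bool} {M : Fin m → Fin n → Bool}
    (h : Contains P M) : Contains (tr P) (tr M) := by
  obtain ⟨r, c, hr, hc, he⟩ := h
  exact ⟨c, r, hc, hr, fun j i hij => he i j hij⟩

lemma setOne_tr {m n : ℕ} (M : Fin m → Fin n → Bool) (p : Fin m) (q : Fin n) :
    setOne (tr M) q p = tr (setOne M p q) := by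
  funext j i
  unfold setOne tr
  by_cases h1 : i = p ∧ j = q
  · simp [h1.1, h1.2]
  · have h2 : ¬(j = q ∧ i = p) := fun hh => h1 ⟨hh.2, hh.1⟩
    simp [h1, h2]

lemma saturating_tr {k l m n : ℕ} {P : Fin k → Fin l → Bool} {M : Fin m → Fin n → Bool}
    (h : Saturating P M) : Saturating (tr P) (tr M) := by
  constructor
  · intro hC
    exact h.1 (contains_tr hC)
  · intro q p hpq
    have h2 := contains_tr (h.2 p q hpq)
    rw [← setOne_tr] at h2
    exact h2

lemma weight_tr {m n : ℕ} (M : Fin m → Fin n → Bool) : weight (tr M) = weight M := by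
  unfold weight tr
  apply Finset.card_bij' (fun a _ => (a.2, a.1)) (fun a _ => (a.2, a.1)) <;>
    simp [Finset.mem_filter]

lemma zero_avoids {k l m n : ℕ} {P : Fin k → Fin l → Bool} (i : Fin k) (j : Fin l)
    (hT : P i j = true) : Avoids P (fun _ _ => false : Fin m → Fin n → Bool) := by
  rintro ⟨r, c, _, _, he⟩
  simpa using he i j hT

lemma not_contains_small {k l m n : ℕ} {P : Fin k → Fin l → Bool} {M : Fin m → Fin n → Bool}
    (h : m < k ∨ n < l) : ¬ Contains P M := by
  rintro ⟨r, c, hr, hc, -⟩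
  rcases h with h | h
  · have h1 := sm_le hr ⟨k-1, by omega⟩
    have h2 := (r ⟨k-1, by omega⟩).isLt
    simp at h1
    omega
  · have h1 := sm_le hc ⟨l-1, by omega⟩
    have h2 := (c ⟨l-1, by omega⟩).isLt
    simp at h1
    omega

lemma weight_allfalse {m n : ℕ} : weight (fun _ _ => false : Fin m → Fin n → Bool) = 0 := by
  unfold weight
  simp

lemma weight_alltrue {m n : ℕ} : weight (fun _ _ => true : Fin m → Fin n → Bool) = m * n := by
  unfold weight
  simp

lemma sat_small {k l n : ℕ} {P : Fin k → Fin l → Bool} (h : n < k ∨ n < l) :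
    satF P n n = n * n := by
  have hav : ∀ M : Fin n → Fin n → Bool, Avoids P M := fun M => not_contains_small h
  have hones : Saturating P (fun _ _ => true : Fin n → Fin n → Bool) := by
    refine ⟨hav _, ?_⟩
    intro p q hpq
    simp at hpq
  have hset : {w | ∃ M : Fin n → Fin n → Bool, Saturating P M ∧ weight M = w} = {n*n} := by
    ext w
    simp only [Set.mem_setOf_eq, Set.mem_singleton_iff]
    constructor
    · rintro ⟨M, hM, rfl⟩
      have hall : M = (fun _ _ => true : Fin n → Fin n → Bool) := by
        funext p q
        by_contra hpq
        have hf : M p q = false := by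
          cases hb : M p q
          · rfl
          · exact absurd (by rw [hb]) hpq
        exact hav _ (hM.2 p q hf)
      rw [hall, weight_alltrue]
    · rintro rfl
      exact ⟨_, hones, weight_alltrue⟩
  rw [satF, hset, csInf_singleton]

lemma contains_allfalse {k l m n : ℕ} {P : Fin k → Fin l → Bool} (hF : ∀ i j, P i j = false)
    (hm : k ≤ m) (hn : l ≤ n) (M : Fin m → Fin n → Bool) : Contains P M := by
  refine ⟨fun i => ⟨i.val, by omega⟩, fun j => ⟨j.val, by omega⟩, ?_, ?_, ?_⟩
  · intro x y hxy
    dsimp only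
    simp only [Fin.mk_lt_mk]
    exact hxy
  · intro x y hxy
    dsimp only
    simp only [Fin.mk_lt_mk]
    exact hxy
  · intro i j hij
    rw [hF i j] at hij
    cases hij

lemma sat_allfalse {k l n : ℕ} {P : Fin k → Fin l → Bool} (hF : ∀ i j, P i j = false)
    (hk : k ≤ n) (hl : l ≤ n) : satF P n n = 0 := by
  have hset : {w | ∃ M : Fin n → Fin n → Bool, Saturating P M ∧ weight M = w} = ∅ := by
    ext w
    simp only [Set.mem_setOf_eq, Set.mem_empty_iff_false, iff_false]
    rintro ⟨M, hM, -⟩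
    exact hM.1 (contains_allfalse hF hk hl M)
  rw [satF, hset, Nat.sInf_empty]

lemma sat_small_pattern {k l : ℕ} {P : Fin k → Fin l → Bool} (i : Fin k) (j : Fin l)
    (hT : P i j = true) (hkl : max k l ≤ 1) (n : ℕ) : satF P n n = 0 := by
  have hz : Saturating P (fun _ _ => false : Fin n → Fin n → Bool) := by
    refine ⟨zero_avoids i j hT, ?_⟩
    intro p q _
    refine ⟨fun _ => p, fun _ => q, ?_, ?_, ?_⟩
    · intro x y hxy
      have hx := x.isLt
      have hy := y.isLt
      simp only [Fin.lt_def] at hxy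
      omega
    · intro x y hxy
      have hx := x.isLt
      have hy := y.isLt
      simp only [Fin.lt_def] at hxy
      omega
    · intro i' j' _
      simp [setOne]
  have h1 := satF_le hz
  rw [weight_allfalse] at h1
  omega

def frameQ (n k l a b : ℕ) : Fin n → Fin n → Bool := fun x y =>
  decide (x.val < a) || decide (n - k + a < x.val) || decide (y.val < b) || decide (n - l + b < y.val)

def frameR {k n : ℕ} (hk : k ≤ n) (a : ℕ) (p : Fin n) : Fin k → Fin n := fun i =>
  if i.val < a then ⟨i.val, by have := i.isLt; omega⟩
  else if i.val = a then p
  else ⟨n - k + i.val, by have := i.isLt; omega⟩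

lemma frameR_sm {k n : ℕ} (hk : k ≤ n) {a : ℕ} {p : Fin n} (ha : a < k)
    (hpa : a ≤ p.val) (hpb : p.val ≤ n - k + a) : StrictMono (frameR hk a p) := by
  intro x y hxy
  have hx := x.isLt
  have hy := y.isLt
  have hp := p.isLt
  simp only [Fin.lt_def] at hxy ⊢
  unfold frameR
  split_ifs <;> (try simp only [Fin.mk_lt_mk, Fin.lt_def]) <;> omega

lemma setOne_ge {m n : ℕ} {M : Fin m → Fin n → Bool} {p : Fin m} {q : Fin n} {x y}
    (h : M x y = true) : setOne M p q x y = true := by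
  unfold setOne
  split_ifs <;> simp [h]

lemma setOne_self {m n : ℕ} (M : Fin m → Fin n → Bool) (p : Fin m) (q : Fin n) :
    setOne M p q p q = true := by
  unfold setOne
  simp

lemma frame_avoids {k l n : ℕ} {P : Fin k → Fin l → Bool} (a : Fin k) (b : Fin l)
    (hT : P a b = true) (hk : k ≤ n) (hl : l ≤ n) :
    Avoids P (frameQ n k l a.val b.val) := by
  rintro ⟨r, c, hr, hc, he⟩
  have he' := he a b hT
  have h1 : a.val ≤ (r a).val := sm_le hr a
  have h2 : b.val ≤ (c b).val := sm_le hc b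
  have ha := a.isLt
  have hb := b.isLt
  have h3 : a.val + (k - 1 - a.val) < k := by omega
  have h4 := sm_add hr a (k - 1 - a.val) h3
  have h5 := (r ⟨a.val + (k - 1 - a.val), h3⟩).isLt
  have h6 : b.val + (l - 1 - b.val) < l := by omega
  have h7 := sm_add hc b (l - 1 - b.val) h6
  have h8 := (c ⟨b.val + (l - 1 - b.val), h6⟩).isLt
  unfold frameQ at he'
  simp only [Bool.or_eq_true, decide_eq_true_eq] at he'
  omega

lemma frame_saturating {k l n : ℕ} {P : Fin k → Fin l → Bool} (a : Fin k) (b : Fin l)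
    (hT : P a b = true) (hk : k ≤ n) (hl : l ≤ n) :
    Saturating P (frameQ n k l a.val b.val) := by
  refine ⟨frame_avoids a b hT hk hl, ?_⟩
  intro p q hpq
  unfold frameQ at hpq
  simp only [Bool.or_eq_false_iff, decide_eq_false_iff_not, not_lt] at hpq
  obtain ⟨⟨⟨hpa, hpb⟩, hqa⟩, hqb⟩ := hpq
  have ha := a.isLt
  have hb := b.isLt
  refine ⟨frameR hk a.val p, frameR hl b.val q, frameR_sm hk ha hpa hpb,
    frameR_sm hl hb hqa hqb, ?_⟩
  intro i j hij
  by_cases hia : i.val = a.val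
  · by_cases hjb : j.val = b.val
    · have hi : i = a := Fin.ext hia
      have hj : j = b := Fin.ext hjb
      have hri : frameR hk a.val p i = p := by
        unfold frameR
        simp [hia]
      have hrj : frameR hl b.val q j = q := by
        unfold frameR
        simp [hjb]
      rw [hri, hrj]
      exact setOne_self _ p q
    · -- column j is in the full part
      apply setOne_ge
      have hrj : (frameR hl b.val q j).val < b.val ∨ n - l + b.val < (frameR hl b.val q j).val := by
        unfold frameR
        have hj := j.isLt
        split_ifs <;> simp <;> omega
      unfold frameQ
      simp only [Bool.or_eq_true, decide_eq_true_eq]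
      tauto
  · apply setOne_ge
    have hri : (frameR hk a.val p i).val < a.val ∨ n - k + a.val < (frameR hk a.val p i).val := by
      unfold frameR
      have hi := i.isLt
      split_ifs <;> simp <;> omega
    unfold frameQ
    simp only [Bool.or_eq_true, decide_eq_true_eq]
    tauto

lemma frame_weight {n k l a b : ℕ} (ha : a < k) (hb : b < l) (hk : k ≤ n) (hl : l ≤ n) :
    weight (frameQ n k l a b) ≤ (k-1) * n + n * (l-1) := by
  classical
  have hsub : (Finset.univ.filter (fun p : Fin n × Fin n => frameQ n k l a b p.1 p.2 = true))
      ⊆ ((Finset.univ.filter (fun x : Fin n => x.val < a ∨ n - k + a < x.val)) ×ˢ Finset.univ)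
        ∪ (Finset.univ ×ˢ (Finset.univ.filter (fun y : Fin n => y.val < b ∨ n - l + b < y.val))) := by
    intro x hx
    simp only [Finset.mem_filter, Finset.mem_univ, true_and] at hx
    unfold frameQ at hx
    simp only [Bool.or_eq_true, decide_eq_true_eq] at hx
    simp only [Finset.mem_union, Finset.mem_product, Finset.mem_filter, Finset.mem_univ,
      true_and, and_true]
    tauto
  have hbadr : (Finset.univ.filter (fun x : Fin n => x.val < a ∨ n - k + a < x.val)).card ≤ k - 1 := by
    have : (Finset.univ.filter (fun x : Fin n => x.val < a ∨ n - k + a < x.val)).card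
        ≤ (Finset.range (k-1)).card := by
      apply Finset.card_le_card_of_injOn (fun x => if x.val < a then x.val else x.val - (n - k + 1))
      · intro x hx
        simp only [Finset.mem_coe, Finset.mem_filter, Finset.mem_univ, true_and] at hx
        have hxn := x.isLt
        simp only [Finset.mem_coe, Finset.mem_range]
        split_ifs <;> omega
      · intro x hx y hy hxy
        simp only [Finset.coe_filter, Set.mem_setOf_eq, Finset.mem_univ, true_and] at hx hy
        have hxn := x.isLt
        have hyn := y.isLt
        apply Fin.ext
        simp only at hxy
        split_ifs at hxy <;> omega
    simpa using this
  have hbadc : (Finset.univ.filter (fun y : Fin n => y.val < b ∨ n - l + b < y.val)).card ≤ l - 1 := by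
    have : (Finset.univ.filter (fun y : Fin n => y.val < b ∨ n - l + b < y.val)).card
        ≤ (Finset.range (l-1)).card := by
      apply Finset.card_le_card_of_injOn (fun y => if y.val < b then y.val else y.val - (n - l + 1))
      · intro x hx
        simp only [Finset.mem_coe, Finset.mem_filter, Finset.mem_univ, true_and] at hx
        have hxn := x.isLt
        simp only [Finset.mem_coe, Finset.mem_range]
        split_ifs <;> omega
      · intro x hx y hy hxy
        simp only [Finset.coe_filter, Set.mem_setOf_eq, Finset.mem_univ, true_and] at hx hy
        have hxn := x.isLt
        have hyn := y.isLt
        apply Fin.ext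
        simp only at hxy
        split_ifs at hxy <;> omega
    simpa using this
  unfold weight
  calc (Finset.univ.filter (fun p : Fin n × Fin n => frameQ n k l a b p.1 p.2 = true)).card
      ≤ _ := Finset.card_le_card hsub
    _ ≤ _ := Finset.card_union_le _ _
    _ ≤ (k-1) * n + n * (l-1) := by
        rw [Finset.card_product, Finset.card_product]
        simp only [Finset.card_univ, Fintype.card_fin]
        exact Nat.add_le_add (Nat.mul_le_mul_right n hbadr) (Nat.mul_le_mul_left n hbadc)

lemma sat_linear {k l n : ℕ} {P : Fin k → Fin l → Bool} (a : Fin k) (b : Fin l)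
    (hT : P a b = true) (hk : k ≤ n) (hl : l ≤ n) :
    satF P n n ≤ (k-1) * n + n * (l-1) :=
  le_trans (satF_le (frame_saturating a b hT hk hl)) (frame_weight a.isLt b.isLt hk hl)

lemma setOne_cases {m n : ℕ} {M : Fin m → Fin n → Bool} {p x : Fin m} {q y : Fin n}
    (h1 : setOne M p q x y = true) (h2 : M x y = false) : x = p ∧ y = q := by
  unfold setOne at h1
  split_ifs at h1 with h
  · exact h
  · rw [h1] at h2; cases h2

lemma row_true_of_flip {k l m n : ℕ} {P : Fin k → Fin l → Bool} {M : Fin m → Fin n → Bool}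
    (hsat : Saturating P M) {x : Fin m} {q : Fin n} (hq : M x q = false) :
    ∃ (r : Fin k → Fin m) (c : Fin l → Fin n) (i0 : Fin k) (j0 : Fin l),
      StrictMono r ∧ StrictMono c ∧ (∀ i j, P i j = true → setOne M x q (r i) (c j) = true)
      ∧ P i0 j0 = true ∧ r i0 = x ∧ c j0 = q := by
  obtain ⟨r, c, hr, hc, he⟩ := hsat.2 x q hq
  have hex : ∃ (i0 : Fin k) (j0 : Fin l), P i0 j0 = true ∧ M (r i0) (c j0) = false := by
    by_contra hno
    push_neg at hno
    apply hsat.1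
    refine ⟨r, c, hr, hc, ?_⟩
    intro i j hij
    rcases hb : M (r i) (c j)
    · exact absurd hb (hno i j hij)
    · rfl
  obtain ⟨i0, j0, ht, hf⟩ := hex
  obtain ⟨h1, h2⟩ := setOne_cases (he i0 j0 ht) hf
  exact ⟨r, c, i0, j0, hr, hc, he, ht, h1, h2⟩

/-- In a saturating matrix with a zero in the first row, the first pattern row has a one. -/
lemma pattern_first_row {k l m n : ℕ} {P : Fin k → Fin l → Bool} {M : Fin m → Fin n → Bool}
    (hsat : Saturating P M) (hk0 : 0 < k) {q : Fin n} {hm0 : 0 < m}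
    (hq : M ⟨0, hm0⟩ q = false) : ∃ j, P ⟨0, hk0⟩ j = true := by
  obtain ⟨r, c, i0, j0, hr, hc, he, ht, h1, h2⟩ := row_true_of_flip hsat hq
  have h3 : (r i0).val = 0 := by rw [h1]
  have h4 := sm_le hr i0
  have h5 : i0 = ⟨0, hk0⟩ := by apply Fin.ext; omega
  exact ⟨j0, by rw [← h5]; exact ht⟩

lemma pattern_last_row {k l m n : ℕ} {P : Fin k → Fin l → Bool} {M : Fin m → Fin n → Bool}
    (hsat : Saturating P M) (hk0 : 0 < k) {q : Fin n} {hm0 : 0 < m}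
    (hq : M ⟨m-1, by omega⟩ q = false) : ∃ j, P ⟨k-1, by omega⟩ j = true := by
  obtain ⟨r, c, i0, j0, hr, hc, he, ht, h1, h2⟩ := row_true_of_flip hsat hq
  have h3 : (r i0).val = m - 1 := by rw [h1]
  have hlt : i0.val + (k - 1 - i0.val) < k := by have := i0.isLt; omega
  have h4 := sm_add hr i0 (k - 1 - i0.val) hlt
  have h5 := (r ⟨i0.val + (k - 1 - i0.val), hlt⟩).isLt
  have h6 : i0 = ⟨k-1, by omega⟩ := by apply Fin.ext; simp; omega
  exact ⟨j0, by rw [← h6]; exact ht⟩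

/-- If a saturating matrix has no all-ones row obstruction and small weight,
there is a "safe" all-zero row. -/
lemma exists_safe_row {k l m n : ℕ} {P : Fin k → Fin l → Bool} {M : Fin m → Fin n → Bool}
    (hkl : 2 ≤ max k l) (hm : weight M * (max k l - 1) < m) (hn0 : 0 < n) :
    ∃ bb : Fin m, (∀ j, M bb j = false) ∧
      ∀ x y : Fin m, x < bb → bb < y → (∃ j, M x j = true) → (∃ j, M y j = true) →
        x.val + k ≤ y.val := by
  classical
  by_contra hno
  push_neg at hno
  -- every all-zero row has a close straddling pair of one-rows
  have hno' : ∀ bb : Fin m, (∀ j, M bb j = false) →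
      ∃ x y : Fin m, x < bb ∧ bb < y ∧ (∃ j, M x j = true) ∧ (∃ j, M y j = true) ∧
        y.val < x.val + k := by
    intro bb hbb
    obtain ⟨x, y, h1, h2, h3, h4, h5⟩ := hno bb hbb
    exact ⟨x, y, h1, h2, h3, h4, h5⟩
  choose xf yf hf1 hf2 hf3 hf4 hf5 using hno'
  set φ : Fin m → Fin m := fun u =>
    if h : ∀ j, M u j = false then xf u h else u with hφ
  have hφ_one : ∀ u, ∃ j, M (φ u) j = true := by
    intro u
    rw [hφ]
    dsimp only
    split_ifs with h
    · exact hf3 u h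
    · push_neg at h
      obtain ⟨j, hj⟩ := h
      exact ⟨j, by revert hj; cases M u j <;> simp⟩
  have hφ_le : ∀ u, (φ u).val ≤ u.val ∧ u.val ≤ (φ u).val + (k - 2) := by
    intro u
    rw [hφ]
    dsimp only
    split_ifs with h
    · have h1 := hf1 u h
      have h2 := hf2 u h
      have h5 := hf5 u h
      rw [Fin.lt_def] at h1 h2
      omega
    · omega
  have hcard : (Finset.univ : Finset (Fin m)).card ≤
      (k - 2 + 1) * ((Finset.univ : Finset (Fin m)).image φ).card := by
    apply Finset.card_le_mul_card_image
    intro v hv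
    have hsub : (Finset.univ.filter (fun a => φ a = v)).card ≤ (Finset.range (k-2+1)).card := by
      apply Finset.card_le_card_of_injOn (fun a => a.val - v.val)
      · intro a ha
        simp only [Finset.mem_coe, Finset.mem_filter, Finset.mem_univ, true_and] at ha
        have h1 := hφ_le a
        rw [ha] at h1
        simp only [Finset.mem_coe, Finset.mem_range]
        omega
      · intro a ha a' ha' haa
        simp only [Finset.coe_filter, Set.mem_setOf_eq, Finset.mem_univ, true_and] at ha ha'
        have h1 := hφ_le a
        have h2 := hφ_le a'
        rw [ha] at h1
        rw [ha'] at h2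
        simp only at haa
        apply Fin.ext
        omega
    simpa using hsub
  have himage : ((Finset.univ : Finset (Fin m)).image φ).card ≤ weight M := by
    have hsub : ((Finset.univ : Finset (Fin m)).image φ) ⊆
        Finset.univ.filter (fun x : Fin m => ∃ j, M x j = true) := by
      intro v hv
      simp only [Finset.mem_image] at hv
      obtain ⟨u, _, rfl⟩ := hv
      simp only [Finset.mem_filter, Finset.mem_univ, true_and]
      exact hφ_one u
    have hone : (Finset.univ.filter (fun x : Fin m => ∃ j, M x j = true)).card ≤ weight M := by
      unfold weight
      apply Finset.card_le_card_of_injOn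
        (fun x => (x, if h : ∃ j, M x j = true then h.choose else ⟨0, hn0⟩))
      · intro x hx
        simp only [Finset.mem_coe, Finset.mem_filter, Finset.mem_univ, true_and] at hx ⊢
        rw [dif_pos hx]
        exact hx.choose_spec
      · intro x hx y hy hxy
        simpa using congrArg Prod.fst hxy
    exact le_trans (Finset.card_le_card hsub) hone
  have hfin : m ≤ (k - 2 + 1) * weight M := by
    have := le_trans hcard (Nat.mul_le_mul_left _ himage)
    simpa using this
  have hb2 : (k - 2 + 1) ≤ max k l - 1 := by
    rcases le_or_gt k 1 with h | h
    · have : max k l = l := by omega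
      omega
    · have : k ≤ max k l := le_max_left _ _
      omega
  have : m ≤ weight M * (max k l - 1) := by
    calc m ≤ (k - 2 + 1) * weight M := hfin
      _ ≤ (max k l - 1) * weight M := Nat.mul_le_mul_right _ hb2
      _ = weight M * (max k l - 1) := Nat.mul_comm _ _
  omega

def collapse {m : ℕ} (b : Fin m) : Fin (m+1) → Fin m := fun i =>
  if _ : i.val ≤ b.val then ⟨i.val, by have := b.isLt; omega⟩
  else ⟨i.val - 1, by have := i.isLt; omega⟩

lemma collapse_val {m : ℕ} (b : Fin m) (i : Fin (m+1)) :
    (collapse b i).val = if i.val ≤ b.val then i.val else i.val - 1 := by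
  unfold collapse
  split_ifs <;> rfl

def lift {m : ℕ} (b : Fin m) : Fin m → Fin (m+1) := fun x =>
  if x.val < b.val then ⟨x.val, by have := x.isLt; omega⟩
  else ⟨x.val + 1, by have := x.isLt; omega⟩

lemma lift_val {m : ℕ} (b : Fin m) (x : Fin m) :
    (lift b x).val = if x.val < b.val then x.val else x.val + 1 := by
  unfold lift
  split_ifs <;> rfl

lemma collapse_lift {m : ℕ} (b : Fin m) (x : Fin m) (hx : x ≠ b) :
    collapse b (lift b x) = x := by
  have hv : x.val ≠ b.val := fun h => hx (Fin.ext h)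
  apply Fin.ext
  rw [collapse_val, lift_val]
  split_ifs <;> omega

lemma lift_collapse {m : ℕ} (b : Fin m) (i : Fin (m+1)) (hi : collapse b i ≠ b) :
    lift b (collapse b i) = i := by
  have hvv : (collapse b i).val ≠ b.val := fun h => hi (Fin.ext h)
  have hcv := collapse_val b i
  apply Fin.ext
  rw [lift_val]
  rcases le_or_gt i.val b.val with h | h
  · rw [if_pos h] at hcv
    rw [hcv] at hvv ⊢
    rw [if_pos (by omega)]
  · rw [if_neg (by omega)] at hcv
    rw [hcv] at hvv ⊢
    rw [if_neg (by omega)]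
    omega

def dupRow {m n : ℕ} (M : Fin m → Fin n → Bool) (b : Fin m) : Fin (m+1) → Fin n → Bool :=
  fun i j => M (collapse b i) j

lemma dupRow_weight {m n : ℕ} (M : Fin m → Fin n → Bool) (b : Fin m)
    (hbz : ∀ j, M b j = false) : weight (dupRow M b) = weight M := by
  classical
  unfold weight
  apply Finset.card_bij' (fun (a : Fin (m+1) × Fin n) _ => ((collapse b a.1, a.2) : Fin m × Fin n))
    (fun (a : Fin m × Fin n) _ => ((lift b a.1, a.2) : Fin (m+1) × Fin n))
  · intro a ha
    simp only [Finset.mem_filter, Finset.mem_univ, true_and] at ha ⊢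
    exact ha
  · intro a ha
    simp only [Finset.mem_filter, Finset.mem_univ, true_and] at ha ⊢
    have hne : a.1 ≠ b := by
      intro hh
      rw [hh, hbz a.2] at ha
      cases ha
    show M (collapse b (lift b a.1)) a.2 = true
    rw [collapse_lift b a.1 hne]
    exact ha
  · intro a ha
    simp only [Finset.mem_filter, Finset.mem_univ, true_and] at ha
    have hne : collapse b a.1 ≠ b := by
      intro hh
      have : dupRow M b a.1 a.2 = M b a.2 := by unfold dupRow; rw [hh]
      rw [this, hbz a.2] at ha
      cases ha
    have := lift_collapse b a.1 hne
    exact Prod.ext this rfl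
  · intro a ha
    simp only [Finset.mem_filter, Finset.mem_univ, true_and] at ha
    have hne : a.1 ≠ b := by
      intro hh
      rw [hh, hbz a.2] at ha
      cases ha
    have := collapse_lift b a.1 hne
    exact Prod.ext this rfl

/-- Flipping any zero of the duplicated-row matrix creates an occurrence. -/
lemma dupRow_flips {k l m n : ℕ} {P : Fin k → Fin l → Bool} {M : Fin m → Fin n → Bool}
    (b : Fin m) (hbz : ∀ j, M b j = false) (hsat : Saturating P M) :
    ∀ (p : Fin (m+1)) (q : Fin n), dupRow M b p q = false →
      Contains P (setOne (dupRow M b) p q) := by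
  intro p q hpq
  have hpq' : M (collapse b p) q = false := hpq
  obtain ⟨r, c, hr, hc, he⟩ := hsat.2 (collapse b p) q hpq'
  by_cases hp : p.val = b.val + 1
  · -- flip in the duplicated row: use the special embedding
    have hσp : collapse b p = b := by
      apply Fin.ext
      rw [collapse_val, if_neg (by omega)]
      omega
    set jm : Fin m → Fin (m+1) := fun x =>
      if x.val < b.val then ⟨x.val, by have := x.isLt; omega⟩
      else if x.val = b.val then ⟨b.val + 1, by have := b.isLt; omega⟩
      else ⟨x.val + 1, by have := x.isLt; omega⟩ with hjm
    have hjmval : ∀ x, (jm x).val =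
        if x.val < b.val then x.val else if x.val = b.val then b.val + 1 else x.val + 1 := by
      intro x
      rw [hjm]
      dsimp only
      split_ifs <;> rfl
    have hjmmono : StrictMono jm := by
      intro u v huv
      rw [Fin.lt_def] at huv ⊢
      rw [hjmval, hjmval]
      split_ifs <;> omega
    have hkey : ∀ (x : Fin m) (y : Fin n),
        setOne (dupRow M b) p q (jm x) y = setOne M b q x y := by
      intro x y
      unfold setOne dupRow
      rcases lt_trichotomy x.val b.val with h | h | h
      · have hc1 : ¬(jm x = p ∧ y = q) := by
          rintro ⟨h1, -⟩
          have h2 : (jm x).val = p.val := by rw [h1]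
          rw [hjmval, if_pos h] at h2
          omega
        have hc2 : ¬(x = b ∧ y = q) := by
          rintro ⟨h1, -⟩
          rw [h1] at h
          omega
        have h3 : collapse b (jm x) = x := by
          have hv1 : (jm x).val = x.val := by rw [hjmval, if_pos h]
          apply Fin.ext
          rw [collapse_val, hv1, if_pos (by omega)]
        rw [if_neg hc1, if_neg hc2, h3]
      · have hxb : x = b := Fin.ext h
        have hjx : (jm x).val = b.val + 1 := by rw [hjmval, if_neg (by omega), if_pos h]
        have hjxp : jm x = p := by apply Fin.ext; omega
        by_cases hy : y = q
        · rw [if_pos ⟨hjxp, hy⟩, if_pos ⟨hxb, hy⟩]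
        · rw [if_neg (by tauto), if_neg (by tauto)]
          have h3 : collapse b (jm x) = b := by
            apply Fin.ext
            rw [collapse_val, if_neg (by omega)]
            omega
          rw [h3, hxb]
      · have hc1 : ¬(jm x = p ∧ y = q) := by
          rintro ⟨h1, -⟩
          have h2 : (jm x).val = p.val := by rw [h1]
          rw [hjmval, if_neg (by omega), if_neg (by omega)] at h2
          omega
        have hc2 : ¬(x = b ∧ y = q) := by
          rintro ⟨h1, -⟩
          rw [h1] at h
          omega
        have h3 : collapse b (jm x) = x := by
          have hv1 : (jm x).val = x.val + 1 := by
            rw [hjmval, if_neg (by omega), if_neg (by omega)]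
          apply Fin.ext
          rw [collapse_val, hv1, if_neg (by omega)]
          omega
        rw [if_neg hc1, if_neg hc2, h3]
    refine ⟨fun i => jm (r i), c, hjmmono.comp hr, hc, ?_⟩
    intro i j hij
    rw [hkey, ← hσp]
    exact he i j hij
  · -- flip elsewhere: use the order-embedding around b
    set ι : Fin m → Fin (m+1) := fun x =>
      if x.val ≤ b.val then ⟨x.val, by have := x.isLt; omega⟩
      else ⟨x.val + 1, by have := x.isLt; omega⟩ with hι
    have hιval : ∀ x, (ι x).val = if x.val ≤ b.val then x.val else x.val + 1 := by
      intro x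
      rw [hι]
      dsimp only
      split_ifs <;> rfl
    have hιmono : StrictMono ι := by
      intro u v huv
      rw [Fin.lt_def] at huv ⊢
      rw [hιval, hιval]
      split_ifs <;> omega
    have hcolι : ∀ x : Fin m, collapse b (ι x) = x := by
      intro x
      apply Fin.ext
      rw [collapse_val, hιval]
      split_ifs <;> omega
    have hιp : ι (collapse b p) = p := by
      have hcv := collapse_val b p
      have hbp := p.isLt
      apply Fin.ext
      rw [hιval]
      rcases le_or_gt p.val b.val with h | h
      · rw [if_pos h] at hcv
        rw [hcv, if_pos (by omega)]
      · rw [if_neg (by omega)] at hcv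
        rw [hcv, if_neg (by omega)]
        omega
    have hkey : ∀ (x : Fin m) (y : Fin n),
        setOne (dupRow M b) p q (ι x) y = setOne M (collapse b p) q x y := by
      intro x y
      unfold setOne dupRow
      by_cases hxp : ι x = p ∧ y = q
      · have hxv : x = collapse b p := by rw [← hxp.1, hcolι x]
        rw [if_pos hxp, if_pos ⟨hxv, hxp.2⟩]
      · have hxp2 : ¬(x = collapse b p ∧ y = q) := by
          rintro ⟨h1, h2⟩
          exact hxp ⟨by rw [h1, hιp], h2⟩
        rw [if_neg hxp, if_neg hxp2, hcolι x]
    refine ⟨fun i => ι (r i), c, hιmono.comp hr, hc, ?_⟩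
    intro i j hij
    rw [hkey]
    exact he i j hij

lemma exists_max_filter {k : ℕ} (p : Fin k → Prop) [DecidablePred p] (hne : ∃ t, p t) :
    ∃ tm : Fin k, p tm ∧ ∀ t, p t → t ≤ tm := by
  obtain ⟨t0, ht0⟩ := hne
  have hne' : (Finset.univ.filter p).Nonempty := ⟨t0, by simp [ht0]⟩
  refine ⟨(Finset.univ.filter p).max' hne', ?_, ?_⟩
  · have := Finset.max'_mem _ hne'
    simp only [Finset.mem_filter, Finset.mem_univ, true_and] at this
    exact this
  · intro t ht
    exact Finset.le_max' _ t (by simp [ht])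

lemma exists_min_filter {k : ℕ} (p : Fin k → Prop) [DecidablePred p] (hne : ∃ t, p t) :
    ∃ tm : Fin k, p tm ∧ ∀ t, p t → tm ≤ t := by
  obtain ⟨t0, ht0⟩ := hne
  have hne' : (Finset.univ.filter p).Nonempty := ⟨t0, by simp [ht0]⟩
  refine ⟨(Finset.univ.filter p).min' hne', ?_, ?_⟩
  · have := Finset.min'_mem _ hne'
    simp only [Finset.mem_filter, Finset.mem_univ, true_and] at this
    exact this
  · intro t ht
    exact Finset.min'_le _ t (by simp [ht])

lemma dupRow_avoids {k l m n : ℕ} {P : Fin k → Fin l → Bool} {M : Fin m → Fin n → Bool}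
    (b : Fin m) (hk0 : 0 < k)
    (hbz : ∀ j, M b j = false)
    (hP0 : ∃ j, P ⟨0, hk0⟩ j = true)
    (hPlast : ∃ j, P ⟨k-1, by omega⟩ j = true)
    (hsafe : ∀ x y : Fin m, x < b → b < y → (∃ j, M x j = true) → (∃ j, M y j = true) →
      x.val + k ≤ y.val)
    (hav : Avoids P M) : Avoids P (dupRow M b) := by
  classical
  rintro ⟨r, c, hr, hc, he⟩
  have hstep1 : ∀ (i : Fin k) (j : Fin l), P i j = true →
      (r i).val ≠ b.val ∧ (r i).val ≠ b.val + 1 := by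
    intro i j hij
    have h1 := he i j hij
    constructor
    · intro hv
      have hcb : collapse b (r i) = b := by
        apply Fin.ext
        rw [collapse_val, if_pos (by omega)]
        exact hv
      have h2 : dupRow M b (r i) (c j) = M b (c j) := by unfold dupRow; rw [hcb]
      rw [h2, hbz] at h1
      cases h1
    · intro hv
      have hcb : collapse b (r i) = b := by
        apply Fin.ext
        rw [collapse_val, if_neg (by omega)]
        omega
      have h2 : dupRow M b (r i) (c j) = M b (c j) := by unfold dupRow; rw [hcb]
      rw [h2, hbz] at h1
      cases h1
  by_cases H : (∃ i1 : Fin k, (r i1).val = b.val) ∧ (∃ i2 : Fin k, (r i2).val = b.val + 1)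
  · -- hard case: two pattern rows land on the duplicated pair of zero rows
    obtain ⟨⟨i1, hi1⟩, ⟨i2, hi2⟩⟩ := H
    have hi12 : i1 < i2 := by
      have hlt : r i1 < r i2 := by rw [Fin.lt_def]; omega
      exact hr.lt_iff_lt.mp hlt
    have hA1 : ∀ j, P i1 j ≠ true := fun j hj => (hstep1 i1 j hj).1 hi1
    have hA2 : ∀ j, P i2 j ≠ true := fun j hj => (hstep1 i2 j hj).2 hi2
    have hi1pos : 0 < i1.val := by
      rcases Nat.eq_zero_or_pos i1.val with h | h
      · obtain ⟨j0, hj0⟩ := hP0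
        have he1 : i1 = ⟨0, hk0⟩ := Fin.ext h
        rw [he1] at hA1
        exact absurd hj0 (hA1 j0)
      · exact h
    have hi2lt : i2.val < k - 1 := by
      have h2 := i2.isLt
      rcases Nat.lt_or_ge i2.val (k-1) with h | h
      · exact h
      · obtain ⟨j0, hj0⟩ := hPlast
        have he2 : i2 = ⟨k-1, by omega⟩ := Fin.ext (by show i2.val = k - 1; omega)
        rw [he2] at hA2
        exact absurd hj0 (hA2 j0)
    obtain ⟨tm, htmP, htm_max'⟩ := exists_max_filter
      (fun t : Fin k => (∃ j, P t j = true) ∧ t.val < i1.val) ⟨⟨0, hk0⟩, hP0, hi1pos⟩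
    obtain ⟨htmA, htmlt⟩ := htmP
    have htm_max : ∀ t : Fin k, (∃ j, P t j = true) → t.val < i1.val → t ≤ tm :=
      fun t h1 h2 => htm_max' t ⟨h1, h2⟩
    obtain ⟨tp, htpP, htp_min'⟩ := exists_min_filter
      (fun t : Fin k => (∃ j, P t j = true) ∧ i2.val < t.val) ⟨⟨k-1, by omega⟩, hPlast, hi2lt⟩
    obtain ⟨htpA, htpgt⟩ := htpP
    have htp_min : ∀ t : Fin k, (∃ j, P t j = true) → i2.val < t.val → tp ≤ t :=
      fun t h1 h2 => htp_min' t ⟨h1, h2⟩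
    have hmono : ∀ u v : Fin k, u ≤ v → (r u).val ≤ (r v).val := fun u v huv => hr.monotone huv
    have hmidfalse : ∀ t : Fin k, tm.val < t.val → t.val < tp.val → ∀ j, P t j ≠ true := by
      intro t h1 h2 j hj
      rcases lt_trichotomy t.val i1.val with h3 | h3 | h3
      · have := htm_max t ⟨j, hj⟩ h3
        rw [Fin.le_def] at this
        omega
      · have ht1 : t = i1 := Fin.ext h3
        rw [ht1] at hj
        exact hA1 j hj
      · rcases lt_trichotomy t.val i2.val with h4 | h4 | h4
        · have hge := hmono i1 t (by rw [Fin.le_def]; omega)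
          have hle := hmono t i2 (by rw [Fin.le_def]; omega)
          have := hstep1 t j hj
          omega
        · have ht2 : t = i2 := Fin.ext h4
          rw [ht2] at hj
          exact hA2 j hj
        · have := htp_min t ⟨j, hj⟩ h4
          rw [Fin.le_def] at this
          omega
    -- flanking one-rows of M
    have hx_lt : (r tm).val < b.val := by
      have : r tm < r i1 := hr (by rw [Fin.lt_def]; omega)
      rw [Fin.lt_def] at this
      omega
    have hy_gt : b.val + 1 < (r tp).val := by
      have : r i2 < r tp := hr (by rw [Fin.lt_def]; omega)
      rw [Fin.lt_def] at this
      omega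
    set xM := collapse b (r tm) with hxMdef
    set yM := collapse b (r tp) with hyMdef
    have hxval : xM.val = (r tm).val := by
      rw [hxMdef, collapse_val, if_pos (by omega)]
    have hyval : yM.val = (r tp).val - 1 := by
      rw [hyMdef, collapse_val, if_neg (by omega)]
    have hxone : ∃ j, M xM j = true := by
      obtain ⟨j0, hj0⟩ := htmA
      exact ⟨c j0, he tm j0 hj0⟩
    have hyone : ∃ j, M yM j = true := by
      obtain ⟨j0, hj0⟩ := htpA
      exact ⟨c j0, he tp j0 hj0⟩
    have hsafeXY : xM.val + k ≤ yM.val := by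
      apply hsafe xM yM _ _ hxone hyone
      · rw [Fin.lt_def]; omega
      · rw [Fin.lt_def]; omega
    have hyLt : yM.val < m := yM.isLt
    have htpk : tp.val < k := tp.isLt
    -- the repaired row embedding into M
    set rN : Fin k → Fin m := fun t =>
      if t.val ≤ tm.val then collapse b (r t)
      else if t.val < tp.val then
        ⟨xM.val + (t.val - tm.val), by have := t.isLt; omega⟩
      else collapse b (r t) with hrNdef
    have hrNval : ∀ t : Fin k, (rN t).val =
        if t.val ≤ tm.val then (collapse b (r t)).val
        else if t.val < tp.val then xM.val + (t.val - tm.val)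
        else (collapse b (r t)).val := by
      intro t
      rw [hrNdef]
      dsimp only
      split_ifs <;> rfl
    have hlow : ∀ t : Fin k, t.val ≤ tm.val →
        (collapse b (r t)).val = (r t).val ∧ (r t).val ≤ (r tm).val := by
      intro t ht
      have h1 := hmono t tm (by rw [Fin.le_def]; omega)
      constructor
      · rw [collapse_val, if_pos (by omega)]
      · exact h1
    have hhigh : ∀ t : Fin k, tp.val ≤ t.val →
        (collapse b (r t)).val = (r t).val - 1 ∧ (r tp).val ≤ (r t).val := by
      intro t ht
      have h1 := hmono tp t (by rw [Fin.le_def]; omega)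
      constructor
      · rw [collapse_val, if_neg (by omega)]
      · exact h1
    have hrNmono : StrictMono rN := by
      intro u v huv
      have hruv : (r u).val < (r v).val := by
        have := hr huv
        rwa [Fin.lt_def] at this
      rw [Fin.lt_def] at huv ⊢
      rw [hrNval, hrNval]
      rcases le_or_gt u.val tm.val with hu | hu
      · have hLu := hlow u hu
        rcases le_or_gt v.val tm.val with hv | hv
        · have hLv := hlow v hv
          rw [if_pos hu, if_pos hv]
          omega
        · rcases Nat.lt_or_ge v.val tp.val with hv2 | hv2
          · rw [if_pos hu, if_neg (by omega), if_pos hv2]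
            omega
          · have hHv := hhigh v hv2
            rw [if_pos hu, if_neg (by omega), if_neg (by omega)]
            omega
      · rcases Nat.lt_or_ge u.val tp.val with hu2 | hu2
        · rcases le_or_gt v.val tm.val with hv | hv
          · omega
          · rcases Nat.lt_or_ge v.val tp.val with hv2 | hv2
            · rw [if_neg (by omega), if_pos hu2, if_neg (by omega), if_pos hv2]
              omega
            · have hHv := hhigh v hv2
              rw [if_neg (by omega), if_pos hu2, if_neg (by omega), if_neg (by omega)]
              omega
        · have hHu := hhigh u hu2
          have hHv := hhigh v (by omega)
          rw [if_neg (by omega), if_neg (by omega), if_neg (by omega), if_neg (by omega)]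
          omega
    apply hav
    refine ⟨rN, c, hrNmono, hc, ?_⟩
    intro t j hij
    rcases le_or_gt t.val tm.val with h | h
    · have hrt : rN t = collapse b (r t) := by
        rw [hrNdef]
        dsimp only
        rw [if_pos h]
      rw [hrt]
      exact he t j hij
    · rcases Nat.lt_or_ge t.val tp.val with h2 | h2
      · exact absurd hij (hmidfalse t h h2 j)
      · have hrt : rN t = collapse b (r t) := by
          rw [hrNdef]
          dsimp only
          rw [if_neg (by omega), if_neg (by omega)]
        rw [hrt]
        exact he t j hij
  · -- easy case: at most one of the duplicated rows is used
    apply hav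
    refine ⟨fun i => collapse b (r i), c, ?_, hc, fun i j hij => he i j hij⟩
    intro u v huv
    have hruv : (r u).val < (r v).val := by
      have := hr huv
      rwa [Fin.lt_def] at this
    rw [Fin.lt_def, collapse_val, collapse_val]
    by_cases h1 : (r u).val ≤ b.val
    · by_cases h2 : (r v).val ≤ b.val
      · rw [if_pos h1, if_pos h2]; omega
      · rw [if_pos h1, if_neg h2]
        rcases Nat.lt_or_ge (r u).val b.val with h3 | h3
        · omega
        · rcases Nat.lt_or_ge (b.val+1) (r v).val with h4 | h4
          · omega
          · exact absurd ⟨⟨u, by omega⟩, ⟨v, by omega⟩⟩ H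
    · rw [if_neg h1, if_neg (by omega)]
      omega

lemma extend_rows {k l m n : ℕ} {P : Fin k → Fin l → Bool} {M : Fin m → Fin n → Bool}
    (hT : ∃ i j, P i j = true) (hkl : 2 ≤ max k l)
    (hsat : Saturating P M)
    (hm : weight M * (max k l - 1) < m) (hn : weight M < n) :
    ∃ M' : Fin (m+1) → Fin n → Bool, Saturating P M' ∧ weight M' = weight M := by
  classical
  obtain ⟨it, jt, hPt⟩ := hT
  have hk0 : 0 < k := by have := it.isLt; omega
  have hm0 : 0 < m := Nat.lt_of_le_of_lt (Nat.zero_le _) hm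
  have hn0 : 0 < n := Nat.lt_of_le_of_lt (Nat.zero_le _) hn
  have hzero_row : ∀ x : Fin m, ∃ q, M x q = false := by
    intro x
    by_contra h
    push_neg at h
    have hx : ∀ j, M x j = true := by
      intro j
      have h2 := h j
      revert h2
      cases M x j <;> simp
    have hw : n ≤ weight M := by
      unfold weight
      have h2 := Finset.card_le_card_of_injOn (s := (Finset.univ : Finset (Fin n)))
        (t := Finset.univ.filter (fun p : Fin m × Fin n => M p.1 p.2 = true))
        (fun j : Fin n => ((x, j) : Fin m × Fin n))
        (fun j _ => by simp only [Finset.mem_coe, Finset.mem_filter, Finset.mem_univ, true_and]; exact hx j)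
        (fun a _ b _ hab => by simpa using congrArg Prod.snd hab)
      simpa using h2
    omega
  obtain ⟨q0, hq0⟩ := hzero_row ⟨0, hm0⟩
  have hP0 : ∃ j, P ⟨0, hk0⟩ j = true := pattern_first_row hsat hk0 (hm0 := hm0) hq0
  obtain ⟨qm, hqm⟩ := hzero_row ⟨m-1, by omega⟩
  have hPlast : ∃ j, P ⟨k-1, by omega⟩ j = true := pattern_last_row hsat hk0 (hm0 := hm0) hqm
  obtain ⟨b, hbz, hbsafe⟩ := exists_safe_row (P := P) hkl hm hn0
  exact ⟨dupRow M b,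
    ⟨dupRow_avoids b hk0 hbz hP0 hPlast hbsafe hsat.1, dupRow_flips b hbz hsat⟩,
    dupRow_weight M b hbz⟩

lemma extend_square {k l n : ℕ} {P : Fin k → Fin l → Bool} {M : Fin n → Fin n → Bool}
    (hT : ∃ i j, P i j = true) (hkl : 2 ≤ max k l)
    (hsat : Saturating P M) (hw : weight M * (max k l - 1) < n) :
    ∃ M' : Fin (n+1) → Fin (n+1) → Bool, Saturating P M' ∧ weight M' = weight M := by
  have hn : weight M < n := by
    have h1 : 1 ≤ max k l - 1 := by omega
    calc weight M = weight M * 1 := (Nat.mul_one _).symm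
      _ ≤ weight M * (max k l - 1) := Nat.mul_le_mul_left _ h1
      _ < n := hw
  obtain ⟨M1, hM1sat, hM1w⟩ := extend_rows hT hkl hsat hw hn
  have hTt : ∃ i j, tr P i j = true := by
    obtain ⟨i, j, h⟩ := hT
    exact ⟨j, i, h⟩
  have hklt : 2 ≤ max l k := by rw [Nat.max_comm]; exact hkl
  have hsatt : Saturating (tr P) (tr M1) := saturating_tr hM1sat
  have hwt : weight (tr M1) * (max l k - 1) < n := by
    rw [weight_tr, hM1w, Nat.max_comm]
    exact hw
  have hnt : weight (tr M1) < n + 1 := by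
    rw [weight_tr, hM1w]
    omega
  obtain ⟨M2, hM2sat, hM2w⟩ := extend_rows hTt hklt hsatt hwt hnt
  refine ⟨tr M2, saturating_tr hM2sat, ?_⟩
  rw [weight_tr, hM2w, weight_tr, hM1w]

lemma sat_le_of_seed {k l : ℕ} {P : Fin k → Fin l → Bool}
    (hT : ∃ i j, P i j = true) (hkl : 2 ≤ max k l)
    {n₀ : ℕ} (h2 : (max k l - 1) * satF P n₀ n₀ < n₀) :
    ∀ n : ℕ, n₀ ≤ n → satF P n n ≤ satF P n₀ n₀ := by
  classical
  obtain ⟨it, jt, hPt⟩ := hT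
  have hexists : ∃ M : Fin n₀ → Fin n₀ → Bool, Saturating P M :=
    exists_saturating P ⟨fun _ _ => false, zero_avoids it jt hPt⟩
  obtain ⟨M₀, hM₀, hw₀⟩ := satF_mem P hexists
  have key : ∀ n, n₀ ≤ n →
      ∃ M : Fin n → Fin n → Bool, Saturating P M ∧ weight M = satF P n₀ n₀ := by
    intro n hn
    induction n, hn using Nat.le_induction with
    | base => exact ⟨M₀, hM₀, hw₀⟩
    | succ n hn ih =>
      obtain ⟨M, hMsat, hMw⟩ := ih
      have hw : weight M * (max k l - 1) < n := by
        rw [hMw, Nat.mul_comm]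
        exact lt_of_lt_of_le h2 hn
      obtain ⟨M', h1', h2'⟩ := extend_square ⟨it, jt, hPt⟩ hkl hMsat hw
      exact ⟨M', h1', by rw [h2', hMw]⟩
  intro n hn
  obtain ⟨M, hMsat, hMw⟩ := key n hn
  calc satF P n n ≤ weight M := satF_le hMsat
    _ = _ := hMw


/-- with `k' = max k l`, if `sat(P,n₀,n₀) < n₀/(k'-1)` for some
`n₀ ≥ k'-1`, then `sat(P,n,n) ≤ sat(P,n₀,n₀)` for all `n ≥ n₀`; in particular
`sat(P,n,n)` is either `O(1)` or `Θ(n)`. -/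
theorem sat_dichotomy {k l : ℕ} (P : Fin k → Fin l → Bool) :
    (∀ n₀ : ℕ, max k l - 1 ≤ n₀ → (max k l - 1) * satF P n₀ n₀ < n₀ →
      ∀ n : ℕ, n₀ ≤ n → satF P n n ≤ satF P n₀ n₀) ∧
    ((∃ C : ℕ, ∀ n : ℕ, satF P n n ≤ C) ∨
     (∃ c C : ℕ, 0 < c ∧ ∀ n : ℕ, n ≤ c * satF P n n ∧ satF P n n ≤ C * n)) := by
  classical
  have hsmall_of : ∀ n : ℕ, n < max k l → (n < k ∨ n < l) := by
    intro n hn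
    rcases max_cases k l with ⟨hm, _⟩ | ⟨hm, _⟩ <;> omega
  have main1 : ∀ n₀ : ℕ, max k l - 1 ≤ n₀ → (max k l - 1) * satF P n₀ n₀ < n₀ →
      ∀ n : ℕ, n₀ ≤ n → satF P n n ≤ satF P n₀ n₀ := by
    intro n₀ h1 h2 n hn
    by_cases hT : ∃ i j, P i j = true
    · rcases le_or_gt 2 (max k l) with hkl | hkl
      · exact sat_le_of_seed hT hkl h2 n hn
      · obtain ⟨i, j, hij⟩ := hT
        rw [sat_small_pattern i j hij (by omega) n]
        exact Nat.zero_le _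
    · push_neg at hT
      have hF : ∀ i j, P i j = false := by
        intro i j
        have h3 := hT i j
        revert h3
        cases P i j <;> simp
      rcases le_or_gt (max k l) n₀ with hc | hc
      · have hzero : satF P n n = 0 := sat_allfalse hF
          (le_trans (le_trans (le_max_left k l) hc) hn)
          (le_trans (le_trans (le_max_right k l) hc) hn)
        omega
      · rw [sat_small (hsmall_of n₀ hc)] at h2
        have hn₀ : n₀ = max k l - 1 := by omega
        rcases Nat.eq_zero_or_pos n₀ with h0 | h0
        · omega
        · have hx : n₀ ≤ n₀ * (n₀ * n₀) := by
            calc n₀ = n₀ * 1 := (Nat.mul_one _).symm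
              _ ≤ n₀ * (n₀ * n₀) := Nat.mul_le_mul_left _ (by
                calc 1 ≤ n₀ := h0
                  _ = n₀ * 1 := (Nat.mul_one _).symm
                  _ ≤ n₀ * n₀ := Nat.mul_le_mul_left _ h0)
          rw [← hn₀] at h2
          omega
  refine ⟨main1, ?_⟩
  by_cases hT : ∃ i j, P i j = true
  · by_cases hEx : ∃ n₀, (max k l - 1 ≤ n₀) ∧ ((max k l - 1) * satF P n₀ n₀ < n₀)
    · left
      obtain ⟨n₀, hn₀1, hn₀2⟩ := hEx
      refine ⟨(Finset.range (n₀+1)).sup (fun i => satF P i i), ?_⟩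
      intro n
      rcases le_or_gt n n₀ with h | h
      · exact Finset.le_sup (f := fun i => satF P i i) (Finset.mem_range.mpr (by omega))
      · calc satF P n n ≤ satF P n₀ n₀ := main1 n₀ hn₀1 hn₀2 n (le_of_lt h)
          _ ≤ _ := Finset.le_sup (f := fun i => satF P i i) (Finset.mem_range.mpr (by omega))
    · right
      push_neg at hEx
      have hkl2 : 2 ≤ max k l := by
        by_contra hc
        push_neg at hc
        have h1 := hEx 1 (by omega)
        have hmx : max k l - 1 = 0 := by omega
        rw [hmx] at h1
        simp at h1
      refine ⟨max k l - 1, (k - 1) + (l - 1) + max k l, by omega, ?_⟩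
      intro n
      constructor
      · rcases le_or_gt (max k l - 1) n with h | h
        · exact hEx n h
        · rw [sat_small (hsmall_of n (by omega))]
          rcases Nat.eq_zero_or_pos n with h0 | h0
          · omega
          · calc n = 1 * n := (Nat.one_mul _).symm
              _ ≤ ((max k l - 1) * n) * n := by
                  apply Nat.mul_le_mul_right
                  have : 1 ≤ max k l - 1 := by omega
                  calc 1 = 1 * 1 := rfl
                    _ ≤ (max k l - 1) * n := Nat.mul_le_mul this h0
              _ = (max k l - 1) * (n * n) := Nat.mul_assoc _ _ _
      · rcases le_or_gt (max k l) n with h | h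
        · obtain ⟨i, j, hij⟩ := hT
          have h1 := sat_linear i j hij (le_trans (le_max_left k l) h)
            (le_trans (le_max_right k l) h)
          calc satF P n n ≤ (k-1) * n + n * (l-1) := h1
            _ ≤ ((k - 1) + (l - 1) + max k l) * n := by
                rw [Nat.mul_comm n (l-1), Nat.add_mul, Nat.add_mul]
                omega
        · rw [sat_small (hsmall_of n h)]
          have h1 : n ≤ (k - 1) + (l - 1) + max k l := by omega
          exact Nat.mul_le_mul h1 (le_refl n)
  · left
    push_neg at hT
    have hF : ∀ i j, P i j = false := by
      intro i j
      have h3 := hT i j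
      revert h3
      cases P i j <;> simp
    refine ⟨max k l * max k l, ?_⟩
    intro n
    rcases le_or_gt (max k l) n with h | h
    · rw [sat_allfalse hF (le_trans (le_max_left k l) h) (le_trans (le_max_right k l) h)]
      exact Nat.zero_le _
    · rw [sat_small (hsmall_of n h)]
      exact Nat.mul_le_mul (le_of_lt h) (le_of_lt h)
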